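/- Let A ∈ (F[D,D^{-1}])^{ñ×ñ} be upper triangular with diagonal entries β_i D^{j_i}, β_i ∈ F\{0}, such that Σ_i j_i = 0, and suppose all nonzero entries in each column of A have the same exponent of D. Let β ∈ F \ {0,1} and Δ = [[A, βA],[A, A]] ∈ (F[D,D^{-1}])^{n×n} with n = 2ñ, and let Γ ∈ F^{n×n} be a permutation matrix. Then T(D) = Γ·Δ has determinant a nonzero element of F, and hence is invertible over F[D,D^{-1}]. -/
import Mathlib

open LaurentPolynomial

lemma T_prod {R : Type*} [CommSemiring R] {ι : Type*} (s : Finset ι) (j : ι → ℤ) :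
    (∏ i ∈ s, (T (j i) : R[T;T⁻¹])) = T (∑ i ∈ s, j i) := by
  classical
  induction s using Finset.cons_induction with
  | empty => simp [T_zero]
  | cons a s ha ih => rw [Finset.prod_cons, Finset.sum_cons, T_add, ih]

/-- let `A` be upper triangular over `F[D,D⁻¹]` with diagonal entries
`β_i D^{j_i}` (`β_i ≠ 0`, `Σ j_i = 0`), all nonzero entries in a column sharing the
same exponent of `D`; let `β ∈ F \ {0,1}`, `Δ = [[A, βA],[A, A]]` and `Γ` a
permutation matrix.  Then `det (Γ·Δ)` is a nonzero element of `F` and `Γ·Δ` is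
invertible over the Laurent polynomials. -/
theorem stmt17 {F : Type*} [Field F] (hF : 2 < Nat.card F ∨ Infinite F)
    {nt : ℕ} (hnt : 1 ≤ nt)
    (A : Matrix (Fin nt) (Fin nt) F[T;T⁻¹])
    (hupper : A.BlockTriangular (id : Fin nt → Fin nt))
    (β : Fin nt → F) (hβ0 : ∀ i, β i ≠ 0) (j : Fin nt → ℤ)
    (hdiag : ∀ i, A i i = C (β i) * T (j i)) (hsum : (∑ i, j i) = 0)
    (hcol : ∀ c : Fin nt, ∃ e : ℤ, ∀ r : Fin nt,
      A r c ≠ 0 → ∃ γ : F, A r c = C γ * T e)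
    (b : F) (hb0 : b ≠ 0) (hb1 : b ≠ 1)
    (p : Equiv.Perm (Fin nt ⊕ Fin nt)) :
    (∃ c : F, c ≠ 0 ∧
      ((p.permMatrix F[T;T⁻¹]) *
        Matrix.fromBlocks A (C b • A) A A).det = C c) ∧
    ∃ P : Matrix (Fin nt ⊕ Fin nt) (Fin nt ⊕ Fin nt) F[T;T⁻¹],
      ((p.permMatrix F[T;T⁻¹]) * Matrix.fromBlocks A (C b • A) A A) * P = 1 ∧
      P * ((p.permMatrix F[T;T⁻¹]) * Matrix.fromBlocks A (C b • A) A A) = 1 := by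
  classical
  set M : Matrix (Fin nt ⊕ Fin nt) (Fin nt ⊕ Fin nt) F[T;T⁻¹] :=
    Matrix.fromBlocks A (C b • A) A A with hM
  -- determinant of A
  have hdetA : A.det = C (∏ i, β i) := by
    rw [Matrix.det_of_upperTriangular hupper]
    calc (∏ i, A i i) = ∏ i, (C (β i) * T (j i)) := by
          exact Finset.prod_congr rfl fun i _ => hdiag i
      _ = (∏ i, C (β i)) * ∏ i, (T (j i) : F[T;T⁻¹]) := by rw [Finset.prod_mul_distrib]
      _ = C (∏ i, β i) * T (∑ i, j i) := by rw [map_prod, T_prod]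
      _ = C (∏ i, β i) := by rw [hsum, T_zero, mul_one]
  -- row reduction matrix
  set E : Matrix (Fin nt ⊕ Fin nt) (Fin nt ⊕ Fin nt) F[T;T⁻¹] :=
    Matrix.fromBlocks 1 0 (-1) 1 with hE
  have hEM : E * M = Matrix.fromBlocks A (C b • A) 0 ((1 - C b) • A) := by
    rw [hE, hM, Matrix.fromBlocks_multiply]
    congr 1 <;> simp [sub_smul, Matrix.neg_mul, Matrix.smul_mul, sub_eq_neg_add, add_smul, neg_smul]
  have hdetE : E.det = 1 := by
    simp [hE, Matrix.det_fromBlocks_zero₁₂]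
  have hdetM : M.det = C ((∏ i, β i) * ((1 - b) ^ nt * ∏ i, β i)) := by
    have h1 : (E * M).det = E.det * M.det := Matrix.det_mul E M
    rw [hdetE, one_mul] at h1
    rw [← h1, hEM, Matrix.det_fromBlocks_zero₂₁, Matrix.det_smul, hdetA]
    have : (1 - C b : F[T;T⁻¹]) = C (1 - b) := by simp [map_sub]
    rw [this, ← map_pow, ← map_mul, ← map_mul, Fintype.card_fin]
  have hdetT : ((p.permMatrix F[T;T⁻¹]) * M).det
      = C (((Equiv.Perm.sign p : ℤ) : F) * ((∏ i, β i) * ((1 - b) ^ nt * ∏ i, β i))) := by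
    rw [Matrix.det_mul, Matrix.det_permutation, hdetM]
    simp only [map_mul, map_intCast, mul_assoc]
  set c : F := ((Equiv.Perm.sign p : ℤ) : F) * ((∏ i, β i) * ((1 - b) ^ nt * ∏ i, β i))
    with hc
  have hcne : c ≠ 0 := by
    have hs : ((Equiv.Perm.sign p : ℤ) : F) ≠ 0 := by
      rcases Int.units_eq_one_or (Equiv.Perm.sign p) with h | h <;> rw [h] <;> norm_num
    have hprod : (∏ i, β i) ≠ 0 := Finset.prod_ne_zero_iff.2 fun i _ => hβ0 i
    have h1b : (1 - b) ≠ 0 := sub_ne_zero.2 (Ne.symm hb1)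
    exact mul_ne_zero hs (mul_ne_zero hprod (mul_ne_zero (pow_ne_zero _ h1b) hprod))
  refine ⟨⟨c, hcne, hdetT⟩, ?_⟩
  have hunit : IsUnit ((p.permMatrix F[T;T⁻¹]) * M).det := by
    rw [hdetT]
    exact (isUnit_iff_ne_zero.2 hcne).map C
  exact ⟨_, Matrix.mul_nonsing_inv _ hunit, Matrix.nonsing_inv_mul _ hunit⟩
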